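/- If a connected spanning submultigraph H of 2*G (the multigraph obtained from G by doubling each edge) has every vertex of degree 2 or 4, then G has a 2-walk. -/

import Mathlib

namespace StmtAux11

open SimpleGraph Walk Finset

set_option linter.unusedSectionVars false
set_option linter.unusedVariables false

variable {V : Type*} [Fintype V] [DecidableEq V] {G : SimpleGraph V}


open SimpleGraph Walk Finset

set_option linter.unusedSectionVars false

variable {V : Type*} [Fintype V] [DecidableEq V] {G : SimpleGraph V}

/-- Edge-use count of a walk. -/
def ec {u v : V} (p : G.Walk u v) (a b : V) : ℕ := p.edges.count s(a, b)

@[simp] lemma ec_nil {u : V} (a b : V) : ec (Walk.nil : G.Walk u u) a b = 0 := by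
  simp [ec]

lemma ec_symm {u v : V} (p : G.Walk u v) (a b : V) : ec p a b = ec p b a := by
  simp [ec, Sym2.eq_swap]

lemma ec_append {u v w : V} (p : G.Walk u v) (q : G.Walk v w) (a b : V) :
    ec (p.append q) a b = ec p a b + ec q a b := by
  simp [ec, Walk.edges_append, List.count_append]

lemma ec_cons {u v w : V} (h : G.Adj u v) (p : G.Walk v w) (a b : V) :
    ec (Walk.cons h p) a b = ec p a b + (if s(u, v) = s(a, b) then 1 else 0) := by
  simp [ec, Walk.edges_cons, List.count_cons]

lemma sum_ite_sym2 (a c x : V) (h : a ≠ c) :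
    (∑ b, if s(a, c) = s(x, b) then 1 else 0) =
      (if x = a then 1 else 0) + (if x = c then 1 else 0) := by
  have key : ∀ b : V, ((s(a, c) : Sym2 V) = s(x, b)) ↔ ((x = a ∧ b = c) ∨ (x = c ∧ b = a)) := by
    intro b
    rw [Sym2.eq_iff]
    constructor
    · rintro (⟨h1, h2⟩ | ⟨h1, h2⟩)
      · exact Or.inl ⟨h1.symm, h2.symm⟩
      · exact Or.inr ⟨h2.symm, h1.symm⟩
    · rintro (⟨h1, h2⟩ | ⟨h1, h2⟩)
      · exact Or.inl ⟨h1.symm, h2.symm⟩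
      · exact Or.inr ⟨h2.symm, h1.symm⟩
  simp only [key]
  rcases eq_or_ne x a with rfl | hxa
  · have hxc : x ≠ c := h
    simp only [hxc, false_and, or_false, true_and, if_pos rfl, if_neg hxc]
    simp [Finset.sum_ite_eq']
  · rcases eq_or_ne x c with rfl | hxc
    · have : x ≠ a := fun hh => hxa hh
      simp only [hxa, false_and, false_or, true_and, if_neg hxa, if_pos rfl]
      simp [Finset.sum_ite_eq']
    · simp [hxa, hxc]

lemma sum_ec {u v : V} (p : G.Walk u v) (x : V) :
    ∑ b, ec p x b = (p.support.dropLast).count x + (p.support.tail).count x := by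
  induction p with
  | nil => simp [ec]
  | @cons a c w h p ih =>
    have hne : p.support ≠ [] := p.support_ne_nil
    have hdl : (Walk.cons h p).support.dropLast = a :: p.support.dropLast := by
      rw [Walk.support_cons, List.dropLast_cons_of_ne_nil hne]
    have hsupp : p.support = c :: p.support.tail := p.support_eq_cons
    have hc : (p.support).count x = (if x = c then 1 else 0) + (p.support.tail).count x := by
      conv_lhs => rw [hsupp]
      generalize p.support.tail = L
      rcases eq_or_ne x c with hh | hh
      · simp [List.count_cons, hh, Nat.add_comm]
      · simp [List.count_cons, hh, Ne.symm hh]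
    have hd : (a :: p.support.dropLast).count x
        = (if x = a then 1 else 0) + (p.support.dropLast).count x := by
      rcases eq_or_ne x a with hh | hh
      · simp [List.count_cons, hh, Nat.add_comm]
      · simp [List.count_cons, hh, Ne.symm hh]
    calc ∑ b, ec (Walk.cons h p) x b
        = ∑ b, (ec p x b + (if s(a, c) = s(x, b) then 1 else 0)) := by
          refine Finset.sum_congr rfl fun b _ => ?_
          rw [ec_cons]
      _ = (∑ b, ec p x b) + ((if x = a then 1 else 0) + (if x = c then 1 else 0)) := by
          rw [Finset.sum_add_distrib, sum_ite_sym2 _ _ _ h.ne]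
      _ = _ := by
          rw [ih, hdl, Walk.support_cons, List.tail_cons, hc, hd]
          omega

lemma count_dropLast_closed {v : V} (p : G.Walk v v) (x : V) :
    (p.support.dropLast).count x = (p.support.tail).count x := by
  have h1 : p.support = p.support.dropLast ++ [v] := by
    conv_lhs => rw [← List.dropLast_append_getLast p.support_ne_nil]
    rw [p.getLast_support]
  have h2 : p.support = v :: p.support.tail := p.support_eq_cons
  have key := congrArg (List.count x) (h1.symm.trans h2)
  rcases eq_or_ne x v with h | h
  · subst h
    simp only [List.count_append, List.count_cons, List.count_nil] at key
    split_ifs at key <;> omega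
  · simp only [List.count_append, List.count_cons, List.count_nil] at key
    split_ifs at key <;> omega

lemma sum_ec_closed {v : V} (p : G.Walk v v) (x : V) :
    ∑ b, ec p x b = 2 * (p.support.tail).count x := by
  rw [sum_ec, count_dropLast_closed]; ring

lemma even_sum_ec_closed {v : V} (p : G.Walk v v) (x : V) :
    Even (∑ b, ec p x b) := by
  rw [sum_ec_closed]; exact even_two_mul _



/-- Simple graph underlying a multiplicity function. -/
def sg (m : V → V → ℕ) : SimpleGraph V := SimpleGraph.fromRel (fun a b => 0 < m a b)

lemma sg_adj (m : V → V → ℕ) {a b : V} :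
    (sg m).Adj a b ↔ a ≠ b ∧ (0 < m a b ∨ 0 < m b a) := by
  simp [sg, SimpleGraph.fromRel_adj]

lemma sg_adj_of (m : V → V → ℕ) {a b : V} (hl : ∀ c, m c c = 0) (h : 0 < m a b) :
    (sg m).Adj a b := by
  refine (sg_adj m).2 ⟨?_, Or.inl h⟩
  rintro rfl
  simp [hl a] at h

lemma even_sum_symm (f : V → V → ℕ) (hf : ∀ a b, f a b = f b a) (hd : ∀ a, f a a = 0)
    (S : Finset V) : Even (∑ z ∈ S, ∑ y ∈ S, f z y) := by
  classical
  induction S using Finset.induction_on with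
  | empty => simp
  | @insert a S ha ih =>
    rw [Finset.sum_insert ha]
    have h1 : ∀ z ∈ S, ∑ y ∈ insert a S, f z y = f z a + ∑ y ∈ S, f z y := by
      intro z _
      rw [Finset.sum_insert ha]
    rw [Finset.sum_congr rfl h1, Finset.sum_insert ha, hd a, Finset.sum_add_distrib]
    have h2 : ∑ z ∈ S, f z a = ∑ y ∈ S, f a y := Finset.sum_congr rfl fun z _ => hf z a
    rw [h2]
    obtain ⟨k, hk⟩ := ih
    exact ⟨(∑ y ∈ S, f a y) + k, by omega⟩

lemma reach_of_odd (m : V → V → ℕ) (hsym : ∀ a b, m a b = m b a) (hl : ∀ c, m c c = 0)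
    (u x : V) (hne : u ≠ x)
    (hu : Odd (∑ y, m u y)) (hx : Odd (∑ y, m x y))
    (hothers : ∀ z, z ≠ u → z ≠ x → Even (∑ y, m z y)) :
    (sg m).Reachable u x := by
  classical
  by_contra hreach
  set S : Finset V := Finset.univ.filter (fun z => (sg m).Reachable u z) with hS
  have hmemS : ∀ z, z ∈ S ↔ (sg m).Reachable u z := by
    intro z; simp [hS]
  have huS : u ∈ S := (hmemS u).2 (Reachable.refl u)
  have hxS : x ∉ S := fun h => hreach ((hmemS x).1 h)
  have hclosed : ∀ z ∈ S, ∀ y, 0 < m z y → y ∈ S := by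
    intro z hz y hy
    exact (hmemS y).2 (((hmemS z).1 hz).trans (sg_adj_of m hl hy).reachable)
  have hsum : ∀ z ∈ S, ∑ y, m z y = ∑ y ∈ S, m z y := by
    intro z hz
    exact (Finset.sum_subset (Finset.subset_univ S) (fun y _ hy => by
      by_contra h
      exact hy (hclosed z hz y (Nat.pos_of_ne_zero h)))).symm
  have heven : Even (∑ z ∈ S, ∑ y, m z y) := by
    rw [Finset.sum_congr rfl hsum]
    exact even_sum_symm m hsym hl S
  have hodd : Odd (∑ z ∈ S, ∑ y, m z y) := by
    rw [← Finset.sum_erase_add S _ huS]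
    have he : Even (∑ z ∈ S.erase u, ∑ y, m z y) := by
      apply Finset.even_sum
      intro z hz
      have hzu : z ≠ u := (Finset.mem_erase.1 hz).1
      have hzx : z ≠ x := fun h => hxS (h ▸ (Finset.mem_erase.1 hz).2)
      exact hothers z hzu hzx
    obtain ⟨k, hk⟩ := he
    obtain ⟨j, hj⟩ := hu
    exact ⟨k + j, by omega⟩
  exact (Nat.not_even_iff_odd.2 hodd) heven

lemma reach_sub (m c : V → V → ℕ) (hsymm : ∀ a b, m a b = m b a)
    (hsymc : ∀ a b, c a b = c b a) (P : V → Prop)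
    (hc : ∀ a b, 0 < c a b → P a) :
    ∀ {z t : V}, (sg m).Walk z t → P t →
      ∃ x, P x ∧ (sg (fun p q => m p q - c p q)).Reachable z x := by
  intro z t p
  induction p with
  | nil => exact fun ht => ⟨_, ht, Reachable.refl _⟩
  | @cons a b t hab p ih =>
    intro ht
    by_cases hPa : P a
    · exact ⟨a, hPa, Reachable.refl a⟩
    · obtain ⟨x, hx, hr⟩ := ih ht
      refine ⟨x, hx, Reachable.trans ?_ hr⟩
      have hmab : 0 < m a b := by
        rcases (sg_adj m).1 hab with ⟨_, h | h⟩
        · exact h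
        · rw [hsymm]; exact h
      have hcab : c a b = 0 := by
        by_contra h
        exact hPa (hc a b (Nat.pos_of_ne_zero h))
      have : (sg (fun p q => m p q - c p q)).Adj a b := by
        refine (sg_adj _).2 ⟨((sg_adj m).1 hab).1, Or.inl ?_⟩
        simp only [hcab, Nat.sub_zero]
        exact hmab
      exact this.reachable


lemma exists_trailwalk (m : V → V → ℕ) (hsym : ∀ a b, m a b = m b a) (hl : ∀ c, m c c = 0)
    (hG : ∀ a b, 0 < m a b → G.Adj a b) (heven : ∀ z, Even (∑ y, m z y))
    (x u : V) (hxu : 0 < m x u) :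
    ∃ w1 : G.Walk x x, (∀ a b, ec w1 a b ≤ m a b) ∧ 0 < ec w1 x u := by
  classical
  have hne : x ≠ u := by rintro rfl; simp [hl x] at hxu
  set m₁ : V → V → ℕ := fun p q => if (s(p, q) : Sym2 V) = s(x, u) then m p q - 1 else m p q
    with hm₁
  have hpos : ∀ a b, ((s(a, b) : Sym2 V) = s(x, u)) → 0 < m a b := by
    intro a b h
    rcases Sym2.eq_iff.1 h with ⟨rfl, rfl⟩ | ⟨rfl, rfl⟩
    · exact hxu
    · rw [hsym]; exact hxu
  have hdeg : ∀ z, ∑ y, m₁ z y = (∑ y, m z y) - (if z = x ∨ z = u then 1 else 0) := by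
    intro z
    have h1 : ∀ y, m₁ z y = m z y - (if (s(z, y) : Sym2 V) = s(x, u) then 1 else 0) := by
      intro y
      simp only [hm₁]
      by_cases h : (s(z, y) : Sym2 V) = s(x, u)
      · rw [if_pos h, if_pos h]
      · rw [if_neg h, if_neg h, Nat.sub_zero]
    rw [Finset.sum_congr rfl (fun y _ => h1 y)]
    rw [Finset.sum_tsub_distrib Finset.univ (fun y _ => by
      by_cases h : (s(z, y) : Sym2 V) = s(x, u)
      · simpa [h, Nat.one_le_iff_ne_zero, Nat.pos_iff_ne_zero] using hpos z y h
      · simp [h])]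
    congr 1
    have key : ∀ y : V, ((s(z, y) : Sym2 V) = s(x, u)) ↔ ((z = x ∧ y = u) ∨ (z = u ∧ y = x)) := by
      intro y; rw [Sym2.eq_iff]
    simp only [key]
    rcases eq_or_ne z x with rfl | hzx
    · have : z ≠ u := hne
      simp only [this, false_and, or_false, true_and]
      simp [Finset.sum_ite_eq']
    · rcases eq_or_ne z u with rfl | hzu
      · simp only [hzx, false_and, false_or, true_and]
        simp [Finset.sum_ite_eq', hzx, hne.symm]
      · simp [hzx, hzu]
  have hone_le_x : 1 ≤ ∑ y, m x y :=
    le_trans hxu (Finset.single_le_sum (fun i _ => Nat.zero_le _) (Finset.mem_univ u))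
  have hone_le_u : 1 ≤ ∑ y, m u y := by
    have : 0 < m u x := by rw [hsym u x]; exact hxu
    exact le_trans this (Finset.single_le_sum (fun i _ => Nat.zero_le _) (Finset.mem_univ x))
  have hdegx : Odd (∑ y, m₁ x y) := by
    rw [hdeg x, if_pos (Or.inl rfl)]
    exact Nat.Even.sub_odd hone_le_x (heven x) odd_one
  have hdegu : Odd (∑ y, m₁ u y) := by
    rw [hdeg u, if_pos (Or.inr rfl)]
    exact Nat.Even.sub_odd hone_le_u (heven u) odd_one
  have hothers : ∀ z, z ≠ u → z ≠ x → Even (∑ y, m₁ z y) := by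
    intro z hzu hzx
    rw [hdeg z, if_neg (by rintro (h | h) <;> [exact hzx h; exact hzu h]), Nat.sub_zero]
    exact heven z
  have hsym₁ : ∀ a b, m₁ a b = m₁ b a := by
    intro a b
    simp only [hm₁]
    rw [show (s(b, a) : Sym2 V) = s(a, b) from Sym2.eq_swap, hsym a b]
  have hl₁ : ∀ c, m₁ c c = 0 := by intro c; simp [hm₁, hl]
  have hle₁ : ∀ a b, m₁ a b ≤ m a b := by
    intro a b
    simp only [hm₁]
    split <;> omega
  have hre : (sg m₁).Reachable u x :=
    reach_of_odd m₁ hsym₁ hl₁ u x (Ne.symm hne) hdegu hdegx hothers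
  obtain ⟨q0⟩ := hre
  let p : (sg m₁).Walk u x := (q0.toPath : (sg m₁).Path u x)
  have hpath : p.IsPath := (q0.toPath).2
  have hnodup : p.edges.Nodup := hpath.isTrail.edges_nodup
  have hle : sg m₁ ≤ G := by
    intro a b hab
    rcases (sg_adj m₁).1 hab with ⟨hne', h | h⟩
    · exact hG a b (lt_of_lt_of_le h (hle₁ a b))
    · exact (hG b a (lt_of_lt_of_le h (hle₁ b a))).symm
  have hsub : ∀ e ∈ p.edges, e ∈ G.edgeSet := by
    intro e he
    exact SimpleGraph.edgeSet_mono hle (Walk.edges_subset_edgeSet _ he)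
  let qG : G.Walk u x := p.transfer G hsub
  have hqedges : qG.edges = p.edges := Walk.edges_transfer p hsub
  refine ⟨Walk.cons (hG x u hxu) qG, ?_, ?_⟩
  · intro a b
    have hc : ec (Walk.cons (hG x u hxu) qG) a b
        = qG.edges.count s(a, b) + (if (s(x, u) : Sym2 V) = s(a, b) then 1 else 0) := by
      simp [ec, Walk.edges_cons, List.count_cons]
    rw [hc, hqedges]
    by_cases hmem : (s(a, b) : Sym2 V) ∈ p.edges
    · have hcount : p.edges.count s(a, b) ≤ 1 := List.nodup_iff_count_le_one.1 hnodup _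
      have hadj : (sg m₁).Adj a b := Walk.adj_of_mem_edges p hmem
      have hm₁pos : 0 < m₁ a b := by
        rcases (sg_adj m₁).1 hadj with ⟨_, h | h⟩
        · exact h
        · rw [hsym₁]; exact h
      by_cases heq : (s(x, u) : Sym2 V) = s(a, b)
      · have h2 : m₁ a b = m a b - 1 := by simp only [hm₁]; rw [if_pos heq.symm]
        have : 2 ≤ m a b := by omega
        simp only [if_pos heq]
        omega
      · have h2 : m₁ a b = m a b := by
          simp only [hm₁]
          rw [if_neg (fun hh => heq (Eq.symm hh))]
        simp only [if_neg heq]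
        omega
    · rw [List.count_eq_zero_of_not_mem hmem]
      by_cases heq : (s(x, u) : Sym2 V) = s(a, b)
      · simpa [heq, Nat.one_le_iff_ne_zero, Nat.pos_iff_ne_zero] using hpos a b heq.symm
      · simp [heq]
  · simp [ec, Walk.edges_cons, List.count_cons]

lemma extend (n : ℕ) : ∀ (m : V → V → ℕ), (∑ a, ∑ b, m a b) ≤ n →
    (∀ a b, m a b = m b a) → (∀ c, m c c = 0) → (∀ a b, 0 < m a b → G.Adj a b) →
    (∀ z, Even (∑ y, m z y)) →
    ∀ (v : V) (w : G.Walk v v),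
      (∀ z y, 0 < m z y → ∃ x ∈ w.support, (sg m).Reachable z x) →
      ∃ w' : G.Walk v v, (∀ a b, ec w' a b = ec w a b + m a b) ∧
        (∀ t, t ∈ w.support → t ∈ w'.support) := by
  induction n with
  | zero =>
    intro m htot hsym hl hG heven v w hcov
    have h0 : ∀ a b, m a b = 0 := by
      intro a b
      have h1 : ∑ b, m a b ≤ 0 := le_trans
        (Finset.single_le_sum (f := fun a => ∑ b, m a b) (fun i _ => Nat.zero_le _)
          (Finset.mem_univ a)) htot
      have h2 : m a b ≤ ∑ b', m a b' :=
        Finset.single_le_sum (fun i _ => Nat.zero_le _) (Finset.mem_univ b)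
      omega
    exact ⟨w, fun a b => by simp [h0], fun t ht => ht⟩
  | succ n ih =>
    intro m htot hsym hl hG heven v w hcov
    by_cases h0 : ∀ a b, m a b = 0
    · exact ⟨w, fun a b => by simp [h0], fun t ht => ht⟩
    push_neg at h0
    obtain ⟨a0, b0, hab0⟩ := h0
    have hab : 0 < m a0 b0 := Nat.pos_of_ne_zero hab0
    obtain ⟨x₀, hx₀w, hre⟩ := hcov a0 b0 hab
    have hxdeg : ∃ u', 0 < m x₀ u' := by
      obtain ⟨q⟩ := hre.symm
      cases q with
      | nil => exact ⟨b0, hab⟩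
      | cons h q' =>
        rcases (sg_adj m).1 h with ⟨_, hh | hh⟩
        · exact ⟨_, hh⟩
        · exact ⟨_, by rw [hsym]; exact hh⟩
    obtain ⟨u, hxu⟩ := hxdeg
    obtain ⟨w1, hc_le, hc_pos⟩ := exists_trailwalk m hsym hl hG heven x₀ u hxu
    set c : V → V → ℕ := fun a b => ec w1 a b with hcdef
    set m' : V → V → ℕ := fun a b => m a b - c a b with hm'
    have hsymc : ∀ a b, c a b = c b a := fun a b => ec_symm w1 a b
    have hsym' : ∀ a b, m' a b = m' b a := by
      intro a b; simp only [hm']; rw [hsym, hsymc]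
    have hl' : ∀ t, m' t t = 0 := by intro t; simp only [hm']; rw [hl]; omega
    have hG' : ∀ a b, 0 < m' a b → G.Adj a b := by
      intro a b h
      apply hG
      have : m' a b ≤ m a b := Nat.sub_le _ _
      omega
    have hdegc : ∀ z, ∑ y, m' z y = (∑ y, m z y) - (∑ y, c z y) := by
      intro z
      simp only [hm']
      exact Finset.sum_tsub_distrib Finset.univ (fun y _ => hc_le z y)
    have heven' : ∀ z, Even (∑ y, m' z y) := by
      intro z
      rw [hdegc z]
      have hle : (∑ y, c z y) ≤ ∑ y, m z y := Finset.sum_le_sum (fun y _ => hc_le z y)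
      rw [Nat.even_sub hle]
      constructor <;> intro
      · exact even_sum_ec_closed w1 z
      · exact heven z
    have htot' : (∑ a, ∑ b, m' a b) ≤ n := by
      have h1 : (∑ a, ∑ b, m' a b) = (∑ a, ∑ b, m a b) - (∑ a, ∑ b, c a b) := by
        rw [← Finset.sum_tsub_distrib Finset.univ
          (fun a _ => Finset.sum_le_sum (fun b _ => hc_le a b))]
        exact Finset.sum_congr rfl (fun a _ => hdegc a)
      have h2 : 1 ≤ ∑ a, ∑ b, c a b := by
        have hcpos' : 0 < c x₀ u := hc_pos
        have hx1 : c x₀ u ≤ ∑ b, c x₀ b :=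
          Finset.single_le_sum (fun i _ => Nat.zero_le _) (Finset.mem_univ u)
        have hx2 : (∑ b, c x₀ b) ≤ ∑ a, ∑ b, c a b :=
          Finset.single_le_sum (f := fun a => ∑ b, c a b) (fun i _ => Nat.zero_le _)
            (Finset.mem_univ x₀)
        omega
      omega
    set W : G.Walk v v :=
      (w.takeUntil x₀ hx₀w).append (w1.append (w.dropUntil x₀ hx₀w)) with hW
    have hecW : ∀ a b, ec W a b = ec w a b + c a b := by
      intro a b
      have hspec := congrArg (fun q => ec q a b) (w.take_spec hx₀w)
      simp only [ec_append] at hspec ⊢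
      simp only [hW, ec_append]
      have hcab : c a b = ec w1 a b := rfl
      omega
    have hsupw : ∀ t, t ∈ w.support → t ∈ W.support := by
      intro t ht
      rw [← w.take_spec hx₀w, Walk.mem_support_append_iff] at ht
      simp only [hW, Walk.mem_support_append_iff]
      tauto
    have hsupw1 : ∀ t, t ∈ w1.support → t ∈ W.support := by
      intro t ht
      simp only [hW, Walk.mem_support_append_iff]
      tauto
    have hcov' : ∀ z y, 0 < m' z y → ∃ x' ∈ W.support, (sg m').Reachable z x' := by
      intro z y hzy
      have hmzy : 0 < m z y := by
        have : m' z y ≤ m z y := Nat.sub_le _ _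
        omega
      obtain ⟨x', hx'w, hre'⟩ := hcov z y hmzy
      obtain ⟨pth⟩ := hre'
      have hend : ∀ a b, 0 < c a b → a ∈ W.support := by
        intro a b hcab
        apply hsupw1
        apply Walk.fst_mem_support_of_mem_edges w1
        have : (s(a, b) : Sym2 V) ∈ w1.edges := by
          rw [← List.count_pos_iff]
          exact hcab
        exact this
      obtain ⟨x'', hx'', hr''⟩ :=
        reach_sub m c hsym hsymc (fun t => t ∈ W.support) hend pth (hsupw x' hx'w)
      exact ⟨x'', hx'', hr''⟩
    obtain ⟨w'', hec'', hsup''⟩ := ih m' htot' hsym' hl' hG' heven' v W hcov'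
    refine ⟨w'', fun a b => ?_, fun t ht => hsup'' t (hsupw t ht)⟩
    rw [hec'' a b, hecW a b]
    have h3 : c a b ≤ m a b := hc_le a b
    simp only [hm']
    omega

end StmtAux11




/-- A multigraph on `V`: `m u v` is the number of parallel edges between `u`
and `v`. -/
structure Multigraph (V : Type*) where
  m : V → V → ℕ
  symm : ∀ u v, m u v = m v u
  loopless : ∀ v, m v v = 0

namespace Multigraph

variable {V : Type*}

/-- The underlying simple graph of a multigraph. -/
def toSimple (H : Multigraph V) : SimpleGraph V where
  Adj u v := 0 < H.m u v
  symm := ⟨fun u v h => by have h' : 0 < H.m u v := h; rw [H.symm] at h'; exact h'⟩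
  loopless := ⟨fun v h => by have h' : 0 < H.m v v := h; rw [H.loopless v] at h'; exact absurd h' (lt_irrefl 0)⟩

/-- The degree of a vertex, counting parallel edges with multiplicity. -/
def degree [Fintype V] (H : Multigraph V) (v : V) : ℕ := ∑ w, H.m v w

/-- Union (edge-multiplicity sum) of two multigraphs. -/
def add (H K : Multigraph V) : Multigraph V where
  m u v := H.m u v + K.m u v
  symm := fun u v => by rw [H.symm, K.symm]
  loopless := fun v => by rw [H.loopless, K.loopless]

end Multigraph

/-- `G` has a `k`-walk: a spanning closed walk visiting each vertex at most `k`
times. -/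
def HasKWalk {V : Type*} [DecidableEq V] (G : SimpleGraph V) (k : ℕ) : Prop :=
  ∃ (v : V) (w : G.Walk v v), (∀ x : V, x ∈ w.support) ∧
    ∀ x : V, (w.support.tail).count x ≤ k

/-- If a connected spanning submultigraph `H` of `2*G` has all vertex degrees
equal to 2 or 4, then `G` has a 2-walk. -/
theorem stmt_11 {V : Type*} [Fintype V] [DecidableEq V] (G : SimpleGraph V)
    (H : Multigraph V)
    (hsub : ∀ u v, H.m u v ≤ 2 ∧ (0 < H.m u v → G.Adj u v))
    (hconn : H.toSimple.Connected)
    (hdeg : ∀ v, H.degree v = 2 ∨ H.degree v = 4) :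
    HasKWalk G 2 := by
  classical
  obtain ⟨v⟩ : Nonempty V := hconn.nonempty
  have hsym := H.symm
  have hl := H.loopless
  have hG : ∀ a b, 0 < H.m a b → G.Adj a b := fun a b h => (hsub a b).2 h
  have heven : ∀ z, Even (∑ y, H.m z y) := by
    intro z
    have hdz : (∑ y, H.m z y) = H.degree z := rfl
    rcases hdeg z with h | h <;> rw [hdz, h]
    · exact ⟨1, rfl⟩
    · exact ⟨2, rfl⟩
  have hcov : ∀ z y, 0 < H.m z y →
      ∃ x ∈ (SimpleGraph.Walk.nil : G.Walk v v).support, (StmtAux11.sg H.m).Reachable z x := by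
    intro z y h
    refine ⟨v, by simp, ?_⟩
    have hr : H.toSimple.Reachable z v := hconn.preconnected z v
    refine hr.mono ?_
    intro a b hab
    have hab' : 0 < H.m a b := hab
    exact (StmtAux11.sg_adj H.m).2
      ⟨by rintro rfl; simp [H.loopless a] at hab', Or.inl hab'⟩
  obtain ⟨w', hec, hsup⟩ := StmtAux11.extend (∑ a, ∑ b, H.m a b) H.m le_rfl hsym hl hG heven v
    SimpleGraph.Walk.nil hcov
  have hecm : ∀ a b, StmtAux11.ec w' a b = H.m a b := by
    intro a b
    rw [hec a b]
    simp
  refine ⟨v, w', ?_, ?_⟩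
  · intro x
    have hpos : 0 < H.degree x := by rcases hdeg x with h | h <;> omega
    have hexy : ∃ y, 0 < H.m x y := by
      by_contra h
      push_neg at h
      have h0 : H.degree x = 0 := Finset.sum_eq_zero (fun y _ => Nat.le_zero.mp (h y))
      omega
    obtain ⟨y, hy⟩ := hexy
    have hmem : (s(x, y) : Sym2 V) ∈ w'.edges := by
      rw [← List.count_pos_iff]
      have : List.count (s(x, y) : Sym2 V) w'.edges = StmtAux11.ec w' x y := rfl
      rw [this, hecm x y]
      exact hy
    exact SimpleGraph.Walk.fst_mem_support_of_mem_edges w' hmem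
  · intro x
    have h2 : ∑ b, StmtAux11.ec w' x b = 2 * (w'.support.tail).count x :=
      StmtAux11.sum_ec_closed w' x
    have h3 : ∑ b, StmtAux11.ec w' x b = H.degree x :=
      Finset.sum_congr rfl (fun b _ => hecm x b)
    rcases hdeg x with h | h <;> omega
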